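/- Let n ≥ 3 be odd and let CD_{2n} be the generalized cactus group of the dihedral Coxeter system I_2(n), generated by γ_a, γ_b, γ_{ab} with relations γ_a² = γ_b² = γ_{ab}² = 1, γ_{ab}γ_a γ_{ab} = γ_b and γ_{ab}γ_b γ_{ab} = γ_a (since conjugation by the longest element swaps a and b when n is odd). Then CD_{2n} is isomorphic to the infinite dihedral group D_∞. -/

import Mathlib

/-- The relators of the generalized cactus group `CD_{2n}` of the dihedral Coxeter system
`I₂(n)` for odd `n`: generators `γ_a, γ_b, γ_{ab}` (indexed `0, 1, 2`), with relations
`γ_a² = γ_b² = γ_{ab}² = 1`, `γ_{ab} γ_a γ_{ab} = γ_b` and `γ_{ab} γ_b γ_{ab} = γ_a`. -/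
def dihedralCactusRelsOdd : Set (FreeGroup (Fin 3)) :=
  { .of 0 * .of 0, .of 1 * .of 1, .of 2 * .of 2,
    .of 2 * .of 0 * .of 2 * (.of 1)⁻¹,
    .of 2 * .of 1 * .of 2 * (.of 0)⁻¹ }

namespace DCOdd

open DihedralGroup PresentedGroup

abbrev PG := PresentedGroup dihedralCactusRelsOdd

lemma rel_eq_one {r : FreeGroup (Fin 3)} (h : r ∈ dihedralCactusRelsOdd) :
    (QuotientGroup.mk r : PG) = 1 := by
  rw [← QuotientGroup.mk_one, QuotientGroup.eq]
  simpa using Subgroup.subset_normalClosure h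

lemma of_eq (x : Fin 3) : (PresentedGroup.of x : PG) = QuotientGroup.mk (FreeGroup.of x) := rfl

lemma ha : (PresentedGroup.of 0 : PG) * PresentedGroup.of 0 = 1 := by
  have := rel_eq_one (r := .of 0 * .of 0) (by simp [dihedralCactusRelsOdd])
  simp [of_eq, QuotientGroup.mk_mul] at this ⊢; exact this

lemma hc : (PresentedGroup.of 2 : PG) * PresentedGroup.of 2 = 1 := by
  have := rel_eq_one (r := .of 2 * .of 2) (by simp [dihedralCactusRelsOdd])
  simp [of_eq, QuotientGroup.mk_mul] at this ⊢; exact this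

lemma hcac : (PresentedGroup.of 2 : PG) * .of 0 * .of 2 = .of 1 := by
  have := rel_eq_one (r := .of 2 * .of 0 * .of 2 * (.of 1)⁻¹) (by simp [dihedralCactusRelsOdd])
  have h2 : ((PresentedGroup.of 2 : PG) * .of 0 * .of 2) * (PresentedGroup.of 1 : PG)⁻¹ = 1 := by
    simp [of_eq, QuotientGroup.mk_mul, QuotientGroup.mk_inv] at this ⊢; exact this
  group at h2 ⊢
  exact mul_inv_eq_one.mp h2

/-- g = c * a -/
noncomputable def g : PG := .of 2 * .of 0

lemma c_inv : (PresentedGroup.of 2 : PG)⁻¹ = .of 2 := by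
  rw [inv_eq_iff_mul_eq_one]; exact hc

lemma a_inv : (PresentedGroup.of 0 : PG)⁻¹ = .of 0 := by
  rw [inv_eq_iff_mul_eq_one]; exact ha

lemma hconj : (PresentedGroup.of 2 : PG) * g * (PresentedGroup.of 2 : PG)⁻¹ = g⁻¹ := by
  rw [c_inv, g, mul_inv_rev, a_inv, c_inv, ← mul_assoc, hc, one_mul]

lemma hconj_zpow (i : ℤ) : (PresentedGroup.of 2 : PG) * g ^ i * (PresentedGroup.of 2 : PG)⁻¹ = g ^ (-i) := by
  rw [← conj_zpow, hconj, inv_zpow, zpow_neg]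

lemma key (i : ℤ) : g ^ i * (PresentedGroup.of 2 : PG) = (PresentedGroup.of 2 : PG) * g ^ (-i) := by
  have := hconj_zpow (-i)
  rw [neg_neg] at this
  rw [← this]; group

/-- reinterpret `ZMod 0` as `ℤ` -/
def ti (i : ZMod 0) : ℤ := i

lemma tadd (i j : ZMod 0) : ti (i + j) = ti i + ti j := rfl

lemma tsub (i j : ZMod 0) : ti (j - i) = -ti i + ti j := sub_eq_neg_add _ _

/-- the inverse map D∞ → PG -/
noncomputable def psi : DihedralGroup 0 →* PG where
  toFun x := match x with
    | .r i => g ^ ti i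
    | .sr i => .of 2 * g ^ ti i
  map_one' := by show g ^ ti 0 = 1; show g ^ (0 : ℤ) = 1; simp
  map_mul' x y := by
    rcases x with i | i <;> rcases y with j | j
    · show g ^ ti (i + j) = g ^ ti i * g ^ ti j
      rw [tadd, zpow_add]
    · show PresentedGroup.of 2 * g ^ ti (j - i) = g ^ ti i * (PresentedGroup.of 2 * g ^ ti j)
      rw [← mul_assoc, key, mul_assoc, ← zpow_add, ← tsub]
    · show PresentedGroup.of 2 * g ^ ti (i + j) = PresentedGroup.of 2 * g ^ ti i * g ^ ti j
      rw [mul_assoc, ← zpow_add, tadd]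
    · show g ^ ti (j - i) = PresentedGroup.of 2 * g ^ ti i * (PresentedGroup.of 2 * g ^ ti j)
      rw [mul_assoc, ← mul_assoc (g ^ ti i), key, ← mul_assoc, ← mul_assoc, hc, one_mul,
        ← zpow_add, ← tsub]

def fgen : Fin 3 → DihedralGroup 0 := ![sr 1, sr (-1), sr 0]

lemma sr_inv (i : ZMod 0) : (sr i)⁻¹ = sr i :=
  inv_eq_iff_mul_eq_one.mpr (sr_mul_self i)

lemma r_inv' (i : ZMod 0) : (r i)⁻¹ = r (-i) :=
  inv_eq_iff_mul_eq_one.mpr (by rw [r_mul_r, add_neg_cancel]; exact one_def.symm)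

lemma frels : ∀ r ∈ dihedralCactusRelsOdd, FreeGroup.lift fgen r = 1 := by
  intro r hr
  rcases hr with h | h | h | h | h <;> subst h <;>
    simp [fgen, sr_inv, sr_mul_sr, r_mul_sr, sr_mul_r, r_mul_r, ← one_def]

noncomputable def phi : PG →* DihedralGroup 0 := PresentedGroup.toGroup frels

lemma r_zpow (i : ℤ) : (r 1 : DihedralGroup 0) ^ i = r i := by
  induction i using Int.induction_on with
  | zero => exact (zpow_zero _).trans one_def
  | succ k ih => rw [zpow_add, ih, zpow_one]; exact r_mul_r _ _
  | pred k ih =>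
      rw [sub_eq_add_neg, zpow_add, ih, zpow_neg, zpow_one, r_inv']; exact r_mul_r _ _

lemma phi_g : phi g = r 1 := by
  rw [g, map_mul]
  show fgen 2 * fgen 0 = _
  simp [fgen, sr_mul_sr]

lemma left_inv : ∀ x : PG, psi (phi x) = x := by
  have : psi.comp phi = MonoidHom.id PG := by
    apply PresentedGroup.ext
    intro x
    fin_cases x <;> simp only [MonoidHom.comp_apply, MonoidHom.id_apply, phi,
      PresentedGroup.toGroup.of]
    · show psi (fgen 0) = _
      show PresentedGroup.of 2 * g ^ (1 : ℤ) = _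
      rw [zpow_one, g, ← mul_assoc, hc, one_mul]; rfl
    · show psi (fgen 1) = _
      show PresentedGroup.of 2 * g ^ (-1 : ℤ) = _
      rw [zpow_neg, zpow_one, g, mul_inv_rev, c_inv]
      rw [show (PresentedGroup.of 0 : PG)⁻¹ = .of 0 from by rw [inv_eq_iff_mul_eq_one]; exact ha]
      rw [← mul_assoc, hcac]; rfl
    · show psi (fgen 2) = _
      show PresentedGroup.of 2 * g ^ (0 : ℤ) = _
      simp
  intro x
  exact congrFun (congrArg DFunLike.coe this) x

lemma right_inv : ∀ y : DihedralGroup 0, phi (psi y) = y := by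
  rintro (i | i)
  · show phi (g ^ ti i) = _
    rw [map_zpow, phi_g, r_zpow]
    rfl
  · show phi (PresentedGroup.of 2 * g ^ ti i) = _
    rw [map_mul, map_zpow, phi_g, r_zpow]
    show fgen 2 * _ = _
    show sr 0 * r i = sr i
    rw [sr_mul_r, zero_add]

end DCOdd

/-- for odd `n ≥ 3`, the generalized cactus group `CD_{2n}` of the dihedral
Coxeter system `I₂(n)` is isomorphic to the infinite dihedral group `D_∞`. -/
theorem dihedral_cactus_odd (n : ℕ) (hn : 3 ≤ n) (hodd : Odd n) :
    Nonempty (PresentedGroup dihedralCactusRelsOdd ≃* DihedralGroup 0) := by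
  exact ⟨{ toFun := DCOdd.phi, invFun := DCOdd.psi,
           left_inv := DCOdd.left_inv, right_inv := DCOdd.right_inv,
           map_mul' := map_mul DCOdd.phi }⟩
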